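/- arXiv:math/9812087 — 2 statements merged into one kernel-verified Lean document; each statement's English description precedes it below -/
import Mathlib

section
/- Let F be a free group, u, v ∈ F_q elements of the q-th lower central series term, and I a multi-index of length q. Then the iterated augmented Fox derivative satisfies ε_I(uv) = ε_I(u) + ε_I(v). -/
/-! Fox free differential calculus on the free group `F(n)`, with values in the
integral group ring `ℤF`. -/

/-- The integral group ring of the free group on `n` generators. -/
abbrev FreeGroupRing (n : ℕ) := MonoidAlgebra ℤ (FreeGroup (Fin n))

/-- Left multiplication by a group element, as an additive automorphism of `ℤF`. -/
noncomputable def lmulAut {n : ℕ} (g : FreeGroup (Fin n)) :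
    FreeGroupRing n ≃+ FreeGroupRing n where
  toFun a := MonoidAlgebra.of ℤ (FreeGroup (Fin n)) g * a
  invFun a := MonoidAlgebra.of ℤ (FreeGroup (Fin n)) g⁻¹ * a
  left_inv a := by
    show MonoidAlgebra.of ℤ (FreeGroup (Fin n)) g⁻¹ *
        (MonoidAlgebra.of ℤ (FreeGroup (Fin n)) g * a) = a
    rw [← mul_assoc, ← map_mul, inv_mul_cancel, map_one, one_mul]
  right_inv a := by
    show MonoidAlgebra.of ℤ (FreeGroup (Fin n)) g *
        (MonoidAlgebra.of ℤ (FreeGroup (Fin n)) g⁻¹ * a) = a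
    rw [← mul_assoc, ← map_mul, mul_inv_cancel, map_one, one_mul]
  map_add' a b := mul_add _ a b

/-- The action of `F(n)` on `ℤF` by left multiplication, as a homomorphism to the
multiplicative automorphisms of the (multiplicatively written) additive group `ℤF`. -/
noncomputable def foxAction (n : ℕ) :
    FreeGroup (Fin n) →* MulAut (Multiplicative (FreeGroupRing n)) where
  toFun g := AddEquiv.toMultiplicative (lmulAut g)
  map_one' := by
    refine MulEquiv.ext fun a => ?_
    show Multiplicative.ofAdd (MonoidAlgebra.single 1 1 * Multiplicative.toAdd a) = a
    simp [MonoidAlgebra.one_def.symm]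
  map_mul' g h := by
    refine MulEquiv.ext fun a => ?_
    show MonoidAlgebra.single (g * h) 1 * Multiplicative.toAdd a =
      MonoidAlgebra.single g 1 * (MonoidAlgebra.single h 1 * Multiplicative.toAdd a)
    rw [← mul_assoc, MonoidAlgebra.single_mul_single, mul_one]

/-- The homomorphism `F(n) → ℤF ⋊ F(n)` whose first component computes the `i`-th
Fox derivative: it sends `x_j` to `(δ_{ij}, x_j)`. -/
noncomputable def foxHom {n : ℕ} (i : Fin n) :
    FreeGroup (Fin n) →* SemidirectProduct (Multiplicative (FreeGroupRing n))
      (FreeGroup (Fin n)) (foxAction n) :=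
  FreeGroup.lift fun j =>
    ⟨Multiplicative.ofAdd (if j = i then (1 : FreeGroupRing n) else 0), FreeGroup.of j⟩

/-- The `i`-th Fox derivative `∂_i : F(n) → ℤF`, characterized by `∂_i(x_j) = δ_{ij}`
and `∂_i(uv) = ∂_i(u) + u·∂_i(v)`. -/
noncomputable def foxDeriv {n : ℕ} (i : Fin n) (w : FreeGroup (Fin n)) : FreeGroupRing n :=
  Multiplicative.toAdd (foxHom i w).left

/-- The `ℤ`-linear extension of the Fox derivative to the group ring `ℤF`. -/
noncomputable def foxDerivLin {n : ℕ} (i : Fin n) : FreeGroupRing n →ₗ[ℤ] FreeGroupRing n :=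
  Finsupp.lift (FreeGroupRing n) ℤ (FreeGroup (Fin n)) (foxDeriv i) ∘ₗ
    (MonoidAlgebra.coeffLinearEquiv ℤ).toLinearMap

/-- The augmentation map `ε : ℤF → ℤ`, sending every group element to `1`. -/
noncomputable def augmentation (n : ℕ) : FreeGroupRing n →ₐ[ℤ] ℤ :=
  MonoidAlgebra.lift ℤ ℤ (FreeGroup (Fin n)) 1

/-- Iterated Fox derivatives `∂_{i₁} ∘ ⋯ ∘ ∂_{i_k}` (applied right-to-left). -/
noncomputable def foxIter {n : ℕ} : List (Fin n) → FreeGroupRing n → FreeGroupRing n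
  | [], a => a
  | i :: I, a => foxDerivLin i (foxIter I a)

/-- The composite `ε_I = ε ∘ ∂_{i₁} ∘ ⋯ ∘ ∂_{i_k}` applied to a group element. -/
noncomputable def epsFox {n : ℕ} (I : List (Fin n)) (w : FreeGroup (Fin n)) : ℤ :=
  augmentation n (foxIter I (MonoidAlgebra.of ℤ (FreeGroup (Fin n)) w))

/-! ### Auxiliary lemmas -/

namespace FoxAux

variable {n : ℕ}

lemma aug_of (w : FreeGroup (Fin n)) :
    augmentation n (MonoidAlgebra.of ℤ (FreeGroup (Fin n)) w) = 1 := by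
  simp [augmentation]

lemma foxHom_right (i : Fin n) (w : FreeGroup (Fin n)) : (foxHom i w).right = w := by
  have h : SemidirectProduct.rightHom.comp (foxHom i) =
      MonoidHom.id (FreeGroup (Fin n)) := by
    apply FreeGroup.ext_hom
    intro a
    simp [foxHom]
  exact DFunLike.congr_fun h w

lemma foxDeriv_mul (i : Fin n) (u v : FreeGroup (Fin n)) :
    foxDeriv i (u * v) = foxDeriv i u +
      MonoidAlgebra.of ℤ (FreeGroup (Fin n)) u * foxDeriv i v := by
  unfold foxDeriv
  rw [map_mul, SemidirectProduct.mul_left, foxHom_right]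
  rfl

lemma foxDeriv_one (i : Fin n) : foxDeriv i 1 = 0 := by
  unfold foxDeriv
  rw [map_one]
  rfl

lemma foxDerivLin_of (i : Fin n) (w : FreeGroup (Fin n)) :
    foxDerivLin i (MonoidAlgebra.of ℤ (FreeGroup (Fin n)) w) = foxDeriv i w := by
  unfold foxDerivLin
  rw [LinearMap.comp_apply]
  erw [Finsupp.lift_apply]
  rw [MonoidAlgebra.of_apply]
  erw [Finsupp.sum_single_index (by simp)]
  simp

lemma foxDerivLin_one (i : Fin n) : foxDerivLin i 1 = 0 := by
  rw [show (1 : FreeGroupRing n) = MonoidAlgebra.of ℤ (FreeGroup (Fin n)) 1 from (map_one _).symm,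
    foxDerivLin_of, foxDeriv_one]

lemma foxDerivLin_mul (i : Fin n) (a b : FreeGroupRing n) :
    foxDerivLin i (a * b) = augmentation n b • foxDerivLin i a + a * foxDerivLin i b := by
  induction a using MonoidAlgebra.induction_on with
  | of g =>
    induction b using MonoidAlgebra.induction_on with
    | of h =>
      rw [← map_mul, foxDerivLin_of, foxDerivLin_of, foxDerivLin_of, foxDeriv_mul, aug_of,
        one_smul]
    | add f₁ f₂ h₁ h₂ =>
      rw [mul_add, map_add, h₁, h₂, map_add, map_add, add_smul, mul_add]
      abel
    | smul r f hf =>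
      rw [mul_smul_comm, map_smul, hf, smul_add, map_smul (augmentation n),
        map_smul (foxDerivLin i), smul_eq_mul, mul_smul, mul_smul_comm]
  | add f₁ f₂ h₁ h₂ =>
    rw [add_mul, map_add, h₁, h₂, map_add, add_mul, smul_add]
    abel
  | smul r f hf =>
    rw [smul_mul_assoc, map_smul, hf, map_smul, smul_add, smul_mul_assoc, smul_comm]

lemma foxIter_mul (I : List (Fin n)) (a b : FreeGroupRing n) :
    foxIter I (a * b) = a * foxIter I b +
      ∑ k ∈ Finset.range I.length,
        augmentation n (foxIter (I.drop (k + 1)) b) • foxIter (I.take (k + 1)) a := by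
  induction I with
  | nil => simp [foxIter]
  | cons i I ih =>
    show foxDerivLin i (foxIter I (a * b)) = _
    rw [ih, map_add, foxDerivLin_mul, map_sum]
    simp only [List.length_cons]
    rw [Finset.sum_range_succ']
    simp only [List.take_succ_cons, List.drop_succ_cons, List.take_zero,
      List.drop_zero, map_smul]
    simp only [foxIter]
    abel

/-- The augmentation ideal. -/
noncomputable def Δ (n : ℕ) : Ideal (FreeGroupRing n) :=
  RingHom.ker (augmentation n).toRingHom

lemma mem_Δ {z : FreeGroupRing n} : z ∈ Δ n ↔ augmentation n z = 0 := RingHom.mem_ker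

lemma rmul_mem {m : ℕ} {z : FreeGroupRing n} (hz : z ∈ Δ n ^ m) (r : FreeGroupRing n) :
    z * r ∈ Δ n ^ m := by
  cases m with
  | zero =>
    rw [Submodule.pow_zero, Ideal.one_eq_top]
    trivial
  | succ m =>
    rw [Submodule.pow_succ] at hz ⊢
    refine Submodule.mul_induction_on hz (fun x hx y hy => ?_)
      (fun x y hx hy => by rw [add_mul]; exact add_mem hx hy)
    rw [mul_assoc]
    refine Submodule.mul_mem_mul hx ?_
    rw [mem_Δ, map_mul, mem_Δ.mp hy, zero_mul]

lemma lmul_mem_pow {m : ℕ} {x z : FreeGroupRing n} (hx : x ∈ Δ n) (hz : z ∈ Δ n ^ m) :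
    x * z ∈ Δ n ^ (m + 1) := by
  induction m generalizing z with
  | zero =>
    rw [Submodule.pow_one, mem_Δ, map_mul, mem_Δ.mp hx, zero_mul]
  | succ m ih =>
    rw [Submodule.pow_succ] at hz
    refine Submodule.mul_induction_on hz (fun u hu v hv => ?_)
      (fun a b ha hb => by rw [mul_add]; exact add_mem ha hb)
    rw [← mul_assoc, Submodule.pow_succ]
    exact Submodule.mul_mem_mul (ih hu) hv

lemma pow_le_pow {j m : ℕ} (h : j ≤ m) : Δ n ^ m ≤ Δ n ^ j := by
  obtain ⟨d, rfl⟩ := Nat.exists_eq_add_of_le h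
  induction d with
  | zero => exact le_rfl
  | succ d ih =>
    intro z hz
    rw [show j + (d + 1) = (j + d) + 1 by ring, Submodule.pow_succ] at hz
    refine Submodule.mul_induction_on hz (fun x hx y _ => ?_) (fun x y hx hy => add_mem hx hy)
    exact rmul_mem (ih (Nat.le_add_right _ _) hx) y

lemma deriv_mem {m : ℕ} (i : Fin n) {z : FreeGroupRing n} (hz : z ∈ Δ n ^ (m + 1)) :
    foxDerivLin i z ∈ Δ n ^ m := by
  rw [Submodule.pow_succ] at hz
  refine Submodule.mul_induction_on hz (fun x hx y hy => ?_)
    (fun x y hx hy => by rw [map_add]; exact add_mem hx hy)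
  rw [foxDerivLin_mul, mem_Δ.mp hy, zero_smul, zero_add]
  exact rmul_mem hx _

lemma foxIter_mem (J : List (Fin n)) {m : ℕ} {z : FreeGroupRing n}
    (hz : z ∈ Δ n ^ (m + J.length)) : foxIter J z ∈ Δ n ^ m := by
  induction J generalizing m with
  | nil => simpa [foxIter] using hz
  | cons i J ih =>
    show foxDerivLin i (foxIter J z) ∈ _
    refine deriv_mem i (ih (m := m + 1) ?_)
    convert hz using 2
    simp [List.length_cons]
    ring
  
lemma of_sub_one_mem (k : ℕ) (g : FreeGroup (Fin n))
    (hg : g ∈ (⊤ : Subgroup (FreeGroup (Fin n))).lowerCentralSeries k) :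
    MonoidAlgebra.of ℤ (FreeGroup (Fin n)) g - 1 ∈ Δ n ^ (k + 1) := by
  induction k generalizing g with
  | zero =>
    rw [zero_add, Submodule.pow_one, mem_Δ, map_sub, aug_of, map_one, sub_self]
  | succ k ih =>
    let S : Subgroup (FreeGroup (Fin n)) :=
      { carrier := {g | MonoidAlgebra.of ℤ (FreeGroup (Fin n)) g - 1 ∈ Δ n ^ (k + 2)}
        one_mem' := by
          simp only [Set.mem_setOf_eq, map_one, sub_self]
          exact zero_mem _
        mul_mem' := by
          intro a b ha hb
          simp only [Set.mem_setOf_eq] at ha hb ⊢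
          have h : MonoidAlgebra.of ℤ (FreeGroup (Fin n)) (a * b) - 1 =
              MonoidAlgebra.of ℤ (FreeGroup (Fin n)) a *
                (MonoidAlgebra.of ℤ (FreeGroup (Fin n)) b - 1) +
              (MonoidAlgebra.of ℤ (FreeGroup (Fin n)) a - 1) := by
            rw [map_mul, mul_sub, mul_one]
            abel
          rw [h]
          exact add_mem (Ideal.mul_mem_left _ _ hb) ha
        inv_mem' := by
          intro a ha
          simp only [Set.mem_setOf_eq] at ha ⊢
          have h : MonoidAlgebra.of ℤ (FreeGroup (Fin n)) a⁻¹ - 1 =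
              -(MonoidAlgebra.of ℤ (FreeGroup (Fin n)) a⁻¹ *
                (MonoidAlgebra.of ℤ (FreeGroup (Fin n)) a - 1)) := by
            rw [mul_sub, ← map_mul, inv_mul_cancel, map_one, mul_one, neg_sub]
          rw [h]
          exact neg_mem (Ideal.mul_mem_left _ _ ha) }
    suffices h : (⊤ : Subgroup (FreeGroup (Fin n))).lowerCentralSeries (k + 1) ≤ S from h hg
    rw [Subgroup.lowerCentralSeries_succ, Subgroup.commutator_def]
    rw [Subgroup.closure_le]
    rintro x ⟨p, hp, q, -, rfl⟩
    show MonoidAlgebra.of ℤ (FreeGroup (Fin n)) (p * q * p⁻¹ * q⁻¹) - 1 ∈ Δ n ^ (k + 2)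
    have hp' := ih p hp
    have hq' : MonoidAlgebra.of ℤ (FreeGroup (Fin n)) q - 1 ∈ Δ n := by
      rw [mem_Δ, map_sub, aug_of, map_one, sub_self]
    set P := MonoidAlgebra.of ℤ (FreeGroup (Fin n)) p
    set Q := MonoidAlgebra.of ℤ (FreeGroup (Fin n)) q
    have e1 : p * q * (q * p)⁻¹ = p * q * p⁻¹ * q⁻¹ := by group
    have e2 : q * p * (q * p)⁻¹ = 1 := by group
    have key : MonoidAlgebra.of ℤ (FreeGroup (Fin n)) (p * q * p⁻¹ * q⁻¹) - 1 =
        (P * Q - Q * P) * MonoidAlgebra.of ℤ (FreeGroup (Fin n)) (q * p)⁻¹ := by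
      show _ = (MonoidAlgebra.of ℤ (FreeGroup (Fin n)) p *
          MonoidAlgebra.of ℤ (FreeGroup (Fin n)) q -
          MonoidAlgebra.of ℤ (FreeGroup (Fin n)) q *
          MonoidAlgebra.of ℤ (FreeGroup (Fin n)) p) * _
      rw [sub_mul, ← map_mul, ← map_mul, ← map_mul, ← map_mul, e1, e2, map_one]
    rw [key]
    refine rmul_mem ?_ _
    have hPQ : P * Q - Q * P = (P - 1) * (Q - 1) - (Q - 1) * (P - 1) := by
      noncomm_ring
    rw [hPQ]
    refine sub_mem ?_ ?_
    · rw [Submodule.pow_succ]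
      exact Submodule.mul_mem_mul hp' hq'
    · exact lmul_mem_pow hq' hp'

lemma foxIter_add (J : List (Fin n)) (a b : FreeGroupRing n) :
    foxIter J (a + b) = foxIter J a + foxIter J b := by
  induction J with
  | nil => rfl
  | cons i J ih => show foxDerivLin i _ = _; rw [ih, map_add]; rfl

lemma foxIter_cons_one (i : Fin n) (J : List (Fin n)) :
    foxIter (i :: J) (1 : FreeGroupRing n) = 0 := by
  induction J generalizing i with
  | nil => exact foxDerivLin_one i
  | cons j J ih => show foxDerivLin i (foxIter (j :: J) 1) = 0; rw [ih, map_zero]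

lemma eps_vanish {k : ℕ} {w : FreeGroup (Fin n)}
    (hw : w ∈ (⊤ : Subgroup (FreeGroup (Fin n))).lowerCentralSeries k) {J : List (Fin n)}
    (hne : J ≠ []) (hle : J.length ≤ k) :
    augmentation n (foxIter J (MonoidAlgebra.of ℤ (FreeGroup (Fin n)) w)) = 0 := by
  have h1 : MonoidAlgebra.of ℤ (FreeGroup (Fin n)) w =
      1 + (MonoidAlgebra.of ℤ (FreeGroup (Fin n)) w - 1) := by abel
  rw [h1, foxIter_add, map_add]
  obtain ⟨i, J', rfl⟩ : ∃ i J', J = i :: J' := by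
    cases J with
    | nil => exact absurd rfl hne
    | cons i J' => exact ⟨i, J', rfl⟩
  rw [foxIter_cons_one, map_zero, zero_add]
  have hmem : MonoidAlgebra.of ℤ (FreeGroup (Fin n)) w - 1 ∈
      Δ n ^ (k + 1 - (i :: J').length + (i :: J').length) := by
    refine pow_le_pow ?_ (of_sub_one_mem k w hw)
    omega
  have := foxIter_mem (i :: J') hmem
  have hle1 : (1 : ℕ) ≤ k + 1 - (i :: J').length := by
    simp only [List.length_cons] at hle ⊢
    omega
  have h2 := pow_le_pow hle1 this
  rw [Submodule.pow_one] at h2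
  exact mem_Δ.mp h2

end FoxAux

/-- Let `u, v` be elements of the `q`-th lower central series term `F_q` of the free
group (`F₁ = F`, so `F_q = lowerCentralSeries F (q-1)`), and let `I` be a multi-index
of length `q`.  Then `ε_I(uv) = ε_I(u) + ε_I(v)`. -/
theorem epsFox_mul {n : ℕ} (q : ℕ) (hq : 1 ≤ q)
    (I : List (Fin n)) (hlen : I.length = q)
    (u v : FreeGroup (Fin n))
    (hu : u ∈ (⊤ : Subgroup (FreeGroup (Fin n))).lowerCentralSeries (q - 1))
    (hv : v ∈ (⊤ : Subgroup (FreeGroup (Fin n))).lowerCentralSeries (q - 1)) :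
    epsFox I (u * v) = epsFox I u + epsFox I v := by
  classical
  unfold epsFox
  rw [map_mul, FoxAux.foxIter_mul, map_add, map_mul, FoxAux.aug_of, one_mul, map_sum]
  simp only [map_smul, smul_eq_mul]
  rw [hlen]
  obtain ⟨q', rfl⟩ : ∃ q', q = q' + 1 := ⟨q - 1, by omega⟩
  rw [Finset.sum_range_succ]
  have hlast : I.take (q' + 1) = I ∧ I.drop (q' + 1) = [] := by
    constructor
    · rw [← hlen, List.take_length]
    · rw [← hlen, List.drop_length]
  rw [hlast.1, hlast.2]
  show _ + (_ + augmentation n (foxIter [] (MonoidAlgebra.of ℤ (FreeGroup (Fin n)) v)) * _) = _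
  have : augmentation n (foxIter [] (MonoidAlgebra.of ℤ (FreeGroup (Fin n)) v)) = 1 :=
    FoxAux.aug_of v
  rw [this, one_mul]
  have hmid : ∀ k ∈ Finset.range q',
      augmentation n (foxIter (I.drop (k + 1)) (MonoidAlgebra.of ℤ (FreeGroup (Fin n)) v)) *
        augmentation n (foxIter (I.take (k + 1)) (MonoidAlgebra.of ℤ (FreeGroup (Fin n)) u)) =
        0 := by
    intro k hk
    rw [Finset.mem_range] at hk
    have hlen' : (I.take (k + 1)).length = k + 1 := by
      rw [List.length_take, hlen]
      omega
    have : augmentation n (foxIter (I.take (k + 1))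
        (MonoidAlgebra.of ℤ (FreeGroup (Fin n)) u)) = 0 := by
      refine FoxAux.eps_vanish hu ?_ ?_
      · intro h; rw [h] at hlen'; simp at hlen'
      · rw [hlen']; omega
    rw [this, mul_zero]
  rw [Finset.sum_congr rfl hmid, Finset.sum_const_zero, zero_add]
  ring
end

section
/- For a simple commutator c = [x_{i₁}, [x_{i₂}, […[x_{i_{q−1}}, x_{i_q}]…]]] in the free group F(n), the abelianized Fox derivative satisfies α(∂_i c) = (t_{i₁}−1)⋯(t_{i_{q−2}}−1)·((t_{i_{q−1}}−1)δ_{i,i_q} − (t_{i_q}−1)δ_{i,i_{q−1}}) in the Laurent polynomial ring Z[t₁^{±1},…,t_n^{±1}]. -/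
/-- The ring of integral Laurent polynomials in `n` variables, realized as the group
ring of `ℤⁿ`. -/
abbrev LaurentRing (n : ℕ) := MonoidAlgebra ℤ (Multiplicative (Fin n → ℤ))

/-- The abelianization homomorphism `F(n) → ℤⁿ`, `x_i ↦ t_i`. -/
noncomputable def abHom (n : ℕ) : FreeGroup (Fin n) →* Multiplicative (Fin n → ℤ) :=
  FreeGroup.lift fun i => Multiplicative.ofAdd (Pi.single i 1)

/-- The induced ring homomorphism `α : ℤF → ℤ[t₁^{±1},…,t_n^{±1}]`. -/
noncomputable def alexMap (n : ℕ) : FreeGroupRing n →ₐ[ℤ] LaurentRing n :=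
  MonoidAlgebra.lift ℤ (LaurentRing n) (FreeGroup (Fin n))
    ((MonoidAlgebra.of ℤ (Multiplicative (Fin n → ℤ))).comp (abHom n))

/-- The Laurent variable `t_j`. -/
noncomputable def tvar {n : ℕ} (j : Fin n) : LaurentRing n :=
  MonoidAlgebra.of ℤ (Multiplicative (Fin n → ℤ)) (Multiplicative.ofAdd (Pi.single j 1))

open scoped commutatorElement


section Aux

variable {n : ℕ}

/-- Shorthand for the canonical map `F(n) → ℤF`. -/
noncomputable abbrev ofR (n : ℕ) : FreeGroup (Fin n) →* FreeGroupRing n :=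
  MonoidAlgebra.of ℤ (FreeGroup (Fin n))

lemma foxHom_right (i : Fin n) (w : FreeGroup (Fin n)) : (foxHom i w).right = w := by
  have h : (SemidirectProduct.rightHom).comp (foxHom i) = MonoidHom.id (FreeGroup (Fin n)) := by
    apply FreeGroup.ext_hom
    intro j
    simp [foxHom]
  exact DFunLike.congr_fun h w

lemma foxDeriv_mul (i : Fin n) (u v : FreeGroup (Fin n)) :
    foxDeriv i (u * v) = foxDeriv i u + ofR n u * foxDeriv i v := by
  unfold foxDeriv
  rw [map_mul, SemidirectProduct.mul_left, foxHom_right]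
  rfl

lemma foxDeriv_one (i : Fin n) : foxDeriv i (1 : FreeGroup (Fin n)) = 0 := by
  unfold foxDeriv
  rw [map_one]
  rfl

lemma foxDeriv_of (i j : Fin n) [DecidableEq (Fin n)] :
    foxDeriv i (FreeGroup.of j) = if j = i then 1 else 0 := by
  unfold foxDeriv foxHom
  rw [FreeGroup.lift_apply_of]
  simp

lemma foxDeriv_inv (i : Fin n) (u : FreeGroup (Fin n)) :
    foxDeriv i u⁻¹ = -(ofR n u⁻¹ * foxDeriv i u) := by
  have h := foxDeriv_mul i u⁻¹ u
  rw [inv_mul_cancel, foxDeriv_one] at h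
  exact add_eq_zero_iff_eq_neg.mp h.symm

lemma alexMap_ofR (w : FreeGroup (Fin n)) :
    alexMap n (ofR n w) = MonoidAlgebra.of ℤ (Multiplicative (Fin n → ℤ)) (abHom n w) := by
  unfold alexMap
  rw [MonoidAlgebra.lift_of]
  rfl

lemma abHom_commutator (u v : FreeGroup (Fin n)) : abHom n ⁅u, v⁆ = 1 := by
  rw [map_commutatorElement]
  exact commutatorElement_eq_one_iff_mul_comm.mpr (mul_comm _ _)

lemma abHom_fold (l : List (Fin n)) (a b : Fin n) :
    abHom n (l.foldr (fun j w => ⁅FreeGroup.of j, w⁆) ⁅FreeGroup.of a, FreeGroup.of b⁆) = 1 := by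
  cases l with
  | nil => exact abHom_commutator _ _
  | cons j l => exact abHom_commutator _ _

lemma abHom_of_eq (j : Fin n) :
    MonoidAlgebra.of ℤ (Multiplicative (Fin n → ℤ)) (abHom n (FreeGroup.of j)) = tvar j := by
  rw [abHom, FreeGroup.lift_apply_of]; rfl

/-- The key commutator formula for the abelianized Fox derivative. -/
lemma alexMap_foxDeriv_commutator (i : Fin n) (u v : FreeGroup (Fin n)) :
    alexMap n (foxDeriv i ⁅u, v⁆) =
      (1 - MonoidAlgebra.of ℤ (Multiplicative (Fin n → ℤ)) (abHom n v)) *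
          alexMap n (foxDeriv i u) +
        (MonoidAlgebra.of ℤ (Multiplicative (Fin n → ℤ)) (abHom n u) - 1) *
          alexMap n (foxDeriv i v) := by
  set M := MonoidAlgebra.of ℤ (Multiplicative (Fin n → ℤ)) with hM
  rw [commutatorElement_def, foxDeriv_mul, foxDeriv_mul, foxDeriv_mul,
    foxDeriv_inv i u, foxDeriv_inv i v]
  simp only [map_add, map_mul, map_neg, mul_neg, alexMap_ofR, ← hM]
  have hx : M (abHom n u) * M (abHom n u⁻¹) = 1 := by
    rw [← map_mul, ← map_mul, mul_inv_cancel, map_one, map_one]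
  have hy : M (abHom n v) * M (abHom n v⁻¹) = 1 := by
    rw [← map_mul, ← map_mul, mul_inv_cancel, map_one, map_one]
  set X := M (abHom n u)
  set Y := M (abHom n v)
  set Xi := M (abHom n u⁻¹)
  set Yi := M (abHom n v⁻¹)
  set fu := alexMap n (foxDeriv i u)
  set fv := alexMap n (foxDeriv i v)
  have e1 : X * Y * Xi = Y := by rw [mul_right_comm, hx, one_mul]
  have e2 : X * Y * Xi * Yi = 1 := by rw [e1, hy]
  linear_combination (-fu) * e1 + (-fv) * e2

end Aux


/-- For a simple commutator `c = [x_{i₁}, [x_{i₂}, […[x_{i_{q−1}}, x_{i_q}]…]]]` in the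
free group `F(n)` (here written with the initial indices given by the list `l` and the
last two indices `a`, `b`), the abelianized Fox derivative satisfies
`α(∂_i c) = (t_{i₁}−1)⋯(t_{i_{q−2}}−1)·((t_{i_{q−1}}−1)δ_{i,i_q} − (t_{i_q}−1)δ_{i,i_{q−1}})`. -/
theorem alexMap_foxDeriv_simple_commutator {n : ℕ} [DecidableEq (Fin n)]
    (l : List (Fin n)) (a b i : Fin n) :
    alexMap n (foxDeriv i
        (l.foldr (fun j w => ⁅FreeGroup.of j, w⁆) ⁅FreeGroup.of a, FreeGroup.of b⁆)) =
      (l.map fun j => tvar j - 1).prod *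
        ((tvar a - 1) * (if i = b then 1 else 0) - (tvar b - 1) * (if i = a then 1 else 0)) := by
  induction l with
  | nil =>
    simp only [List.foldr_nil, List.map_nil, List.prod_nil, one_mul]
    rw [alexMap_foxDeriv_commutator, foxDeriv_of, foxDeriv_of, abHom_of_eq, abHom_of_eq,
      apply_ite (alexMap n), apply_ite (alexMap n), map_one, map_zero]
    have e1 : (if a = i then (1 : LaurentRing n) else 0) = if i = a then 1 else 0 := by
      simp [eq_comm]
    have e2 : (if b = i then (1 : LaurentRing n) else 0) = if i = b then 1 else 0 := by
      simp [eq_comm]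
    rw [e1, e2]
    ring
  | cons j l ih =>
    simp only [List.foldr_cons, List.map_cons, List.prod_cons]
    rw [alexMap_foxDeriv_commutator, abHom_fold, map_one, foxDeriv_of, abHom_of_eq,
      apply_ite (alexMap n), map_one, map_zero, ih]
    ring
end
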